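/- Let p = 2, k ≥ 2, N a nonzero integer, ρ ∈ ℚ_2 with ρ^{2N} ∉ {−1,0,1}, set θ = ρ^{2N}, and let h ∈ ℚ_2 be a fixed point of f_θ with h ≠ −1 and ρ^{−N}h + ρ^N ≠ 0. For n ≥ 1 and σ : V_n → Φ define m_n(σ) = ρ^{H_n(σ)} h^{c(σ)} / ((ρ^{−N}h + ρ^N)^{k(k^n−1)/(k−1)} (h + 1)), where c(σ) = card{x ∈ W_n : σ(x) = 1} and H_n(σ) = Σ_{⟨x,y⟩ ∈ L_n} N·σ(x)σ(y). Then the set {|m_n(σ)|_2 : n ≥ 1, σ : V_n → Φ} is unbounded if and only if |ρ|_2 = 1. -/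

import Mathlib

open scoped BigOperators

/-- The vertices of `V_n` of the Cayley tree of order `k`: words of length `≤ n` over
`{1,…,k}` (a word of length `m` is encoded as `Fin m → Fin k`; the root is the empty word). -/
abbrev CayleyVertexLE (k n : ℕ) := Σ m : Fin (n + 1), Fin (m : ℕ) → Fin k

/-- Spin values: configurations take values in `Φ = {-1, 1} ⊆ ℤ`, encoded by `Bool`. -/
def spinValue (b : Bool) : ℤ := if b then 1 else -1

/-- The Ising Hamiltonian `H_n(σ) = Σ_{⟨x,y⟩ ∈ L_n} N·σ(x)σ(y)`: the sum runs over all edges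
`⟨x, x·i⟩` with both endpoints in `V_n`. -/
def isingHam (k : ℕ) (N : ℤ) (n : ℕ) (σ : CayleyVertexLE k n → Bool) : ℤ :=
  ∑ m : Fin n, ∑ f : Fin ((m : ℕ) + 1) → Fin k,
    N * spinValue (σ ⟨⟨(m : ℕ), Nat.lt_succ_of_lt m.2⟩, fun i => f i.castSucc⟩) *
      spinValue (σ ⟨⟨(m : ℕ) + 1, Nat.succ_lt_succ m.2⟩, f⟩)

/-- `c(σ) = card{x ∈ W_n : σ(x) = 1}`. -/
def bdryPlusCount (k n : ℕ) (σ : CayleyVertexLE k n → Bool) : ℕ :=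
  (Finset.univ.filter fun f : Fin n → Fin k =>
    σ ⟨⟨n, Nat.lt_succ_self n⟩, f⟩ = true).card

/-- The cylinder value
`m_n(σ) = ρ^{H_n(σ)} h^{c(σ)} / ((ρ^{-N}h + ρ^N)^{k(k^n-1)/(k-1)} (h + 1))` of the
translation-invariant generalized `2`-adic Gibbs measure `μ_h` of the Ising model. -/
noncomputable def cylinderValue2 (k : ℕ) (N : ℤ) (ρ h : ℚ_[2]) (n : ℕ)
    (σ : CayleyVertexLE k n → Bool) : ℚ_[2] :=
  ρ ^ isingHam k N n σ * h ^ bdryPlusCount k n σ /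
    ((ρ ^ (-N) * h + ρ ^ N) ^ (k * (k ^ n - 1) / (k - 1)) * (h + 1))

namespace IsingAux

/-! ### p-adic valuation helpers -/

lemma pval_mul {x y : ℚ_[2]} (hx : x ≠ 0) (hy : y ≠ 0) :
    (x * y).valuation = x.valuation + y.valuation := Padic.valuation_mul hx hy

lemma pval_pow (n : ℕ) {x : ℚ_[2]} (hx : x ≠ 0) :
    (x ^ n).valuation = n * x.valuation := by
  induction n with
  | zero => simp
  | succ m ih =>
      rw [pow_succ, pval_mul (pow_ne_zero _ hx) hx, ih]
      push_cast; ring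

lemma pval_inv {x : ℚ_[2]} (hx : x ≠ 0) : (x⁻¹).valuation = -x.valuation := by
  have h0 : x * x⁻¹ = 1 := mul_inv_cancel₀ hx
  have := pval_mul hx (inv_ne_zero hx)
  rw [h0, Padic.valuation_one] at this
  linarith

lemma pval_zpow (z : ℤ) {x : ℚ_[2]} (hx : x ≠ 0) :
    (x ^ z).valuation = z * x.valuation := by
  cases z with
  | ofNat n => rw [Int.ofNat_eq_coe, zpow_natCast, pval_pow n hx]
  | negSucc n =>
      rw [zpow_negSucc, pval_inv (pow_ne_zero _ hx), pval_pow (n+1) hx, Int.negSucc_eq]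
      push_cast; ring

lemma pval_neg (x : ℚ_[2]) : (-x).valuation = x.valuation := by
  by_cases hx : x = 0
  · simp [hx]
  have hm : (-1 : ℚ_[2]).valuation = 0 := by
    have := pval_mul (x := (-1 : ℚ_[2])) (y := (-1 : ℚ_[2])) (by norm_num) (by norm_num)
    simp at this
    linarith
  have := pval_mul (x := (-1 : ℚ_[2])) (y := x) (by norm_num) hx
  rw [neg_one_mul] at this
  rw [this, hm, zero_add]

lemma pval_inj {x y : ℚ_[2]} (hx : x ≠ 0) (hy : y ≠ 0) (h : ‖x‖ = ‖y‖) :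
    x.valuation = y.valuation := by
  rw [Padic.norm_eq_zpow_neg_valuation hx, Padic.norm_eq_zpow_neg_valuation hy] at h
  have h2 : (1:ℝ) < (2:ℕ) := by norm_num
  have := (zpow_right_strictMono₀ h2).injective h
  omega

lemma pval_add_eq_left {x y : ℚ_[2]} (hx : x ≠ 0) (hy : y ≠ 0)
    (hlt : x.valuation < y.valuation) : (x + y).valuation = x.valuation := by
  have hxy : x + y ≠ 0 := by
    intro h0
    have h1 : -x = y := neg_eq_of_add_eq_zero_right h0
    rw [← h1, pval_neg] at hlt; omega
  have hnorm : ‖x‖ ≠ ‖y‖ := by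
    intro h
    exact absurd (pval_inj hx hy h) (ne_of_lt hlt)
  have hmax : ‖x + y‖ = max ‖x‖ ‖y‖ := Padic.add_eq_max_of_ne hnorm
  have hyx : ‖y‖ < ‖x‖ := by
    rw [Padic.norm_eq_zpow_neg_valuation hx, Padic.norm_eq_zpow_neg_valuation hy]
    exact zpow_lt_zpow_right₀ (by norm_num) (by omega)
  rw [max_eq_left hyx.le] at hmax
  exact pval_inj hxy hx hmax

lemma pval_add_eq_right {x y : ℚ_[2]} (hx : x ≠ 0) (hy : y ≠ 0)
    (hlt : y.valuation < x.valuation) : (x + y).valuation = y.valuation := by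
  rw [add_comm]; exact pval_add_eq_left hy hx hlt

lemma norm_add_one_le_half {x : ℚ_[2]} (hx : ‖x‖ = 1) : ‖x + 1‖ ≤ 2⁻¹ := by
  set z : ℤ_[2] := ⟨x, le_of_eq hx⟩ with hz
  have hzu : IsUnit z := PadicInt.isUnit_iff.2 (by rw [PadicInt.norm_def]; exact hx)
  have h1 : PadicInt.toZMod z = 1 := by
    have hmap := hzu.map (PadicInt.toZMod (p := 2))
    have hne : PadicInt.toZMod z ≠ 0 := hmap.ne_zero
    revert hne
    generalize PadicInt.toZMod z = a
    revert a; decide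
  have h0 : PadicInt.toZMod (z + 1) = 0 := by
    rw [map_add, map_one, h1]; decide
  have hker : z + 1 ∈ RingHom.ker (PadicInt.toZMod (p := 2)) := h0
  rw [PadicInt.ker_toZMod, PadicInt.maximalIdeal_eq_span_p,
    Ideal.mem_span_singleton] at hker
  obtain ⟨c, hc⟩ := hker
  have hxz : ‖x + 1‖ = ‖z + 1‖ := rfl
  rw [hxz, hc, norm_mul, PadicInt.norm_p]
  have hcle : ‖c‖ ≤ 1 := c.2
  calc ((2:ℕ):ℝ)⁻¹ * ‖c‖ ≤ ((2:ℕ):ℝ)⁻¹ * 1 := by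
        apply mul_le_mul_of_nonneg_left hcle; positivity
    _ = 2⁻¹ := by norm_num

lemma norm_le_two_zpow {x : ℚ_[2]} (hx : x ≠ 0) {m : ℤ} (hm : -x.valuation ≤ m) :
    ‖x‖ ≤ (2:ℝ) ^ m := by
  rw [Padic.norm_eq_zpow_neg_valuation hx]
  have h2 : ((2:ℕ):ℝ) = (2:ℝ) := by norm_num
  rw [h2]
  exact zpow_le_zpow_right₀ (by norm_num) hm

/-! ### counting helpers -/

/-- the edge count of `L_n`. -/
def En (k n : ℕ) : ℕ := k * (k ^ n - 1) / (k - 1)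

lemma En_key {k : ℕ} (hk : 2 ≤ k) (n : ℕ) : (k - 1) * En k n + k = k ^ (n + 1) := by
  have hd : (k - 1) ∣ k ^ n - 1 := by
    simpa using Nat.sub_dvd_pow_sub_pow k 1 n
  have hd2 : (k - 1) ∣ k * (k ^ n - 1) := hd.mul_left k
  have h1 : (k - 1) * En k n = k * (k ^ n - 1) := Nat.mul_div_cancel' hd2
  have h2 : 1 ≤ k ^ n := Nat.one_le_pow _ _ (by omega)
  have h3 : k * (k ^ n - 1) = k * k ^ n - k := by
    rw [Nat.mul_sub, mul_one]
  have e : k ^ (n+1) = k * k ^ n := by rw [pow_succ, mul_comm]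
  have h5 : k ≤ k * k ^ n := Nat.le_mul_of_pos_right k (by positivity)
  omega

lemma En_sum {k : ℕ} (hk : 2 ≤ k) (n : ℕ) :
    ∑ m : Fin n, k ^ ((m : ℕ) + 1) = En k n := by
  have key : ∀ n : ℕ, (k - 1) * (∑ m ∈ Finset.range n, k ^ (m + 1)) + k = k ^ (n + 1) := by
    intro n
    induction n with
    | zero => simp
    | succ m ih =>
        rw [Finset.sum_range_succ, Nat.mul_add]
        have e : k ^ (m+1+1) = k * k ^ (m+1) := by rw [pow_succ, mul_comm]
        have h4 : (k - 1) * k ^ (m + 1) = k * k ^ (m+1) - k ^ (m+1) := by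
          rw [Nat.sub_mul, one_mul]
        have h5 : k ^ (m+1) ≤ k * k ^ (m+1) := Nat.le_mul_of_pos_left _ (by omega)
        omega
  have h1 := key n
  have h2 := En_key hk n
  have h3 : (k-1) * (∑ m ∈ Finset.range n, k ^ (m + 1)) = (k-1) * En k n := by omega
  have h4 := Nat.eq_of_mul_eq_mul_left (show 0 < k - 1 by omega) h3
  rw [Fin.sum_univ_eq_sum_range (fun m => k ^ (m+1)) n, h4]

lemma En_ge {k : ℕ} (hk : 2 ≤ k) (n : ℕ) : n ≤ En k n := by
  obtain ⟨j, rfl⟩ : ∃ j, k = j + 2 := ⟨k - 2, by omega⟩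
  have e1 := En_key hk n
  have hj1 : j + 2 - 1 = j + 1 := by omega
  rw [hj1] at e1
  by_contra hc
  push_neg at hc
  have h5 : (n : ℤ) + 1 ≤ ((j:ℤ)+2)^n := by
    have a1 := Nat.lt_two_pow_self (n := n)
    have a2 : 2^n ≤ (j+2)^n := Nat.pow_le_pow_left (by omega) n
    have : n + 1 ≤ (j+2)^n := by omega
    exact_mod_cast this
  have e1' : ((j:ℤ)+1) * (En (j+2) n : ℤ) + (j+2) = ((j:ℤ)+2)^(n+1) := by exact_mod_cast e1
  have hc' : (En (j+2) n : ℤ) ≤ (n:ℤ) - 1 := by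
    have : (En (j+2) n : ℤ) < (n:ℤ) := by exact_mod_cast hc
    omega
  have e2 : ((j:ℤ)+2)^(n+1) = ((j:ℤ)+2) * ((j:ℤ)+2)^n := by rw [pow_succ]; ring
  have h6 : ((j:ℤ)+2) * ((n:ℤ)+1) ≤ ((j:ℤ)+2) * ((j:ℤ)+2)^n :=
    mul_le_mul_of_nonneg_left h5 (by positivity)
  have h7 : ((j:ℤ)+1) * (En (j+2) n : ℤ) ≤ ((j:ℤ)+1) * ((n:ℤ)-1) :=
    mul_le_mul_of_nonneg_left hc' (by positivity)
  have hn : 0 ≤ (n:ℤ) := Int.natCast_nonneg n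
  nlinarith [e1', e2, h6, h7, hn]

lemma abs_spin (b : Bool) : |spinValue b| = 1 := by cases b <;> simp [spinValue]

lemma isingHam_abs_le {k : ℕ} (hk : 2 ≤ k) (N : ℤ) (n : ℕ) (σ : CayleyVertexLE k n → Bool) :
    |isingHam k N n σ| ≤ |N| * (En k n : ℤ) := by
  unfold isingHam
  calc |∑ m : Fin n, ∑ f : Fin ((m : ℕ) + 1) → Fin k,
      N * spinValue (σ ⟨⟨(m : ℕ), Nat.lt_succ_of_lt m.2⟩, fun i => f i.castSucc⟩) *
        spinValue (σ ⟨⟨(m : ℕ) + 1, Nat.succ_lt_succ m.2⟩, f⟩)|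
      ≤ ∑ m : Fin n, |∑ f : Fin ((m : ℕ) + 1) → Fin k,
      N * spinValue (σ ⟨⟨(m : ℕ), Nat.lt_succ_of_lt m.2⟩, fun i => f i.castSucc⟩) *
        spinValue (σ ⟨⟨(m : ℕ) + 1, Nat.succ_lt_succ m.2⟩, f⟩)| :=
        Finset.abs_sum_le_sum_abs _ _
    _ ≤ ∑ m : Fin n, ∑ _f : Fin ((m : ℕ) + 1) → Fin k, |N| := by
        apply Finset.sum_le_sum
        intro m _
        calc _ ≤ ∑ f : Fin ((m : ℕ) + 1) → Fin k,
            |N * spinValue (σ ⟨⟨(m : ℕ), Nat.lt_succ_of_lt m.2⟩, fun i => f i.castSucc⟩) *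
              spinValue (σ ⟨⟨(m : ℕ) + 1, Nat.succ_lt_succ m.2⟩, f⟩)| :=
              Finset.abs_sum_le_sum_abs _ _
          _ ≤ _ := by
              apply Finset.sum_le_sum
              intro f _
              rw [abs_mul, abs_mul, abs_spin, abs_spin, mul_one, mul_one]
    _ = |N| * (En k n : ℤ) := by
        have e1 : ∀ m : Fin n, ∑ _f : Fin ((m : ℕ) + 1) → Fin k, |N|
            = (k ^ ((m:ℕ)+1) : ℤ) * |N| := by
          intro m
          rw [Finset.sum_const, Finset.card_univ, Fintype.card_fun, Fintype.card_fin,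
            Fintype.card_fin, nsmul_eq_mul]
          push_cast; ring
        rw [Finset.sum_congr rfl (fun m _ => e1 m), ← Finset.sum_mul]
        have e2 : ∑ m : Fin n, ((k:ℤ) ^ ((m:ℕ)+1)) = ((En k n : ℕ) : ℤ) := by
          rw [← En_sum hk n]; push_cast; rfl
        rw [e2]; ring

lemma isingHam_false {k : ℕ} (hk : 2 ≤ k) (N : ℤ) (n : ℕ) :
    isingHam k N n (fun _ => false) = N * (En k n : ℤ) := by
  unfold isingHam
  have e0 : ∀ m : Fin n, ∑ _f : Fin ((m : ℕ) + 1) → Fin k,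
      N * spinValue false * spinValue false = (k ^ ((m:ℕ)+1) : ℤ) * N := by
    intro m
    rw [Finset.sum_const, Finset.card_univ, Fintype.card_fun, Fintype.card_fin,
      Fintype.card_fin, nsmul_eq_mul]
    simp only [spinValue, Bool.false_eq_true, if_false]
    push_cast; ring
  rw [Finset.sum_congr rfl (fun m _ => e0 m)]
  rw [← Finset.sum_mul]
  have e2 : ∑ m : Fin n, ((k:ℤ) ^ ((m:ℕ)+1)) = ((En k n : ℕ) : ℤ) := by
    rw [← En_sum hk n]; push_cast; rfl
  rw [e2]; ring

lemma bdry_le (k n : ℕ) (σ : CayleyVertexLE k n → Bool) :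
    bdryPlusCount k n σ ≤ k ^ n := by
  unfold bdryPlusCount
  calc _ ≤ (Finset.univ : Finset (Fin n → Fin k)).card := Finset.card_filter_le _ _
    _ = k ^ n := by rw [Finset.card_univ, Fintype.card_fun, Fintype.card_fin, Fintype.card_fin]

/-! ### the classification of the valuation of a fixed point -/

lemma s_classification {K q s A B : ℤ} (hK : 2 ≤ K)
    (hA1 : 2*q + s < 0 → A = 2*q + s)
    (hA2 : 0 < 2*q + s → A = 0)
    (hA3 : min (2*q + s) 0 ≤ A)
    (hB1 : s < 2*q → B = s)
    (hB2 : 2*q < s → B = 2*q)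
    (hB3 : min s (2*q) ≤ B)
    (heq : K * A = s + K * B) :
    s = 0 ∨ (q < 0 ∧ (s = -(2*K*q) ∨ s = 2*K*q)) := by
  rcases lt_trichotomy s 0 with hs | hs | hs
  · rcases lt_trichotomy s (2*q) with h1 | h1 | h1
    · rw [hB1 h1] at heq
      rcases lt_trichotomy (2*q + s) 0 with h2 | h2 | h2
      · rw [hA1 h2] at heq
        right
        have hs2 : s = 2*K*q := by linear_combination -heq
        refine ⟨?_, Or.inr hs2⟩
        by_contra hq
        push_neg at hq
        nlinarith [mul_nonneg (show (0:ℤ) ≤ K by omega) hq]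
      · have hA3' : 0 ≤ A := by omega
        exfalso
        nlinarith [mul_le_mul_of_nonneg_left hA3' (show (0:ℤ) ≤ K by omega)]
      · rw [hA2 h2] at heq
        exfalso; nlinarith
    · have hA := hA1 (by omega)
      rw [hA] at heq
      have hB3' : 2*q ≤ B := by omega
      exfalso
      nlinarith [mul_le_mul_of_nonneg_left hB3' (show (0:ℤ) ≤ K by omega)]
    · rw [hB2 h1, hA1 (by omega)] at heq
      exfalso; nlinarith
  · left; exact hs
  · rcases lt_trichotomy (2*q + s) 0 with h2 | h2 | h2
    · rw [hA1 h2, hB2 (by omega)] at heq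
      exfalso; nlinarith
    · rw [hB2 (by omega)] at heq
      have hA3' : 0 ≤ A := by omega
      exfalso
      nlinarith [mul_le_mul_of_nonneg_left hA3' (show (0:ℤ) ≤ K by omega)]
    · rw [hA2 h2] at heq
      rcases lt_trichotomy s (2*q) with h1 | h1 | h1
      · rw [hB1 h1] at heq
        exfalso; nlinarith
      · have hB3' : s ≤ B := by omega
        exfalso
        nlinarith [mul_le_mul_of_nonneg_left hB3' (show (0:ℤ) ≤ K by omega)]
      · rw [hB2 h1] at heq
        right
        have hs2 : s = -(2*K*q) := by linear_combination -heq
        refine ⟨?_, Or.inl hs2⟩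
        by_contra hq
        push_neg at hq
        nlinarith [mul_nonneg (show (0:ℤ) ≤ K by omega) hq]

/-! ### valuation of the cylinder value -/

lemma cyl_ne_zero {k : ℕ} {N : ℤ} {ρ h : ℚ_[2]} {n : ℕ} {σ : CayleyVertexLE k n → Bool}
    (hρ0 : ρ ≠ 0) (hh0 : h ≠ 0) (ht : ρ ^ (-N) * h + ρ ^ N ≠ 0) (hh1 : h + 1 ≠ 0) :
    cylinderValue2 k N ρ h n σ ≠ 0 := by
  unfold cylinderValue2
  exact div_ne_zero (mul_ne_zero (zpow_ne_zero _ hρ0) (pow_ne_zero _ hh0))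
    (mul_ne_zero (pow_ne_zero _ ht) hh1)

lemma val_cyl {k : ℕ} {N : ℤ} {ρ h : ℚ_[2]} {n : ℕ} {σ : CayleyVertexLE k n → Bool}
    (hρ0 : ρ ≠ 0) (hh0 : h ≠ 0) (ht : ρ ^ (-N) * h + ρ ^ N ≠ 0) (hh1 : h + 1 ≠ 0) :
    (cylinderValue2 k N ρ h n σ).valuation =
      isingHam k N n σ * ρ.valuation + (bdryPlusCount k n σ : ℤ) * h.valuation
        - ((En k n : ℤ) * (ρ ^ (-N) * h + ρ ^ N).valuation + (h + 1).valuation) := by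
  unfold cylinderValue2
  have h1 : ρ ^ isingHam k N n σ ≠ 0 := zpow_ne_zero _ hρ0
  have h2 : h ^ bdryPlusCount k n σ ≠ 0 := pow_ne_zero _ hh0
  have h3 : (ρ ^ (-N) * h + ρ ^ N) ^ (k * (k ^ n - 1) / (k - 1)) ≠ 0 := pow_ne_zero _ ht
  have h4 : (ρ ^ (-N) * h + ρ ^ N) ^ (k * (k ^ n - 1) / (k - 1)) * (h + 1) ≠ 0 :=
    mul_ne_zero h3 hh1
  rw [div_eq_mul_inv, pval_mul (mul_ne_zero h1 h2) (inv_ne_zero h4),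
    pval_mul h1 h2, pval_inv h4, pval_mul h3 hh1,
    pval_pow _ ht, pval_pow _ hh0, pval_zpow _ hρ0]
  have hE : k * (k ^ n - 1) / (k - 1) = En k n := rfl
  rw [hE]
  ring

end IsingAux

open IsingAux in
/-- for `p = 2`, the translation-invariant generalized `2`-adic Gibbs measure
`μ_h` of the Ising model associated to a fixed point `h ≠ -1` of `f_θ`, `θ = ρ^{2N}`, is
unbounded if and only if `|ρ|_2 = 1`. -/
theorem ising_measure_unbounded_iff_two_adic
    (k : ℕ) (hk : 2 ≤ k) (N : ℤ) (hN : N ≠ 0)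
    (ρ : ℚ_[2]) (hρ : ρ ^ (2 * N) ≠ -1 ∧ ρ ^ (2 * N) ≠ 0 ∧ ρ ^ (2 * N) ≠ 1)
    (h : ℚ_[2]) (hfix : h ≠ -(ρ ^ (2 * N)) ∧
      ((ρ ^ (2 * N) * h + 1) / (h + ρ ^ (2 * N))) ^ k = h)
    (hne : h ≠ -1) (hdenom : ρ ^ (-N) * h + ρ ^ N ≠ 0) :
    (∀ M : ℝ, ∃ n : ℕ, 1 ≤ n ∧ ∃ σ : CayleyVertexLE k n → Bool,
        M < ‖cylinderValue2 k N ρ h n σ‖) ↔ ‖ρ‖ = 1 := by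
  -- notation
  set θ : ℚ_[2] := ρ ^ (2 * N) with hθdef
  have hθ0 : θ ≠ 0 := hρ.2.1
  have hρ0 : ρ ≠ 0 := by
    intro h0
    apply hθ0
    rw [hθdef, h0, zero_zpow _ (by omega)]
  have hk0 : k ≠ 0 := by omega
  have hh0 : h ≠ 0 := by
    intro h0
    have := hfix.2
    rw [h0, mul_zero, zero_add, zero_add] at this
    have h1 : (1 / θ) ^ k = 0 := this
    rw [pow_eq_zero_iff hk0, one_div, inv_eq_zero] at h1
    exact hθ0 h1
  have hhθ : h + θ ≠ 0 := by
    intro h0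
    exact hfix.1 (eq_neg_of_add_eq_zero_left h0)
  have hnum : θ * h + 1 ≠ 0 := by
    intro h0
    have := hfix.2
    rw [h0, zero_div, zero_pow hk0] at this
    exact hh0 this.symm
  have hh1 : h + 1 ≠ 0 := fun h0 => hne (eq_neg_of_add_eq_zero_left h0)
  -- valuations
  set r : ℤ := ρ.valuation with hrdef
  set q : ℤ := N * r with hqdef
  set s : ℤ := h.valuation with hsdef
  have vθ : θ.valuation = 2 * q := by
    rw [hθdef, pval_zpow _ hρ0, hqdef]; ring
  have vθh : (θ * h).valuation = 2 * q + s := by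
    rw [pval_mul hθ0 hh0, vθ]
  set A : ℤ := (θ * h + 1).valuation with hAdef
  set B : ℤ := (h + θ).valuation with hBdef
  have hpow : (θ * h + 1) ^ k = h * (h + θ) ^ k := by
    have h1 := hfix.2
    rw [div_pow] at h1
    exact (div_eq_iff (pow_ne_zero _ hhθ)).1 h1
  have heqAB : (k:ℤ) * A = s + (k:ℤ) * B := by
    have h1 : ((θ * h + 1) ^ k).valuation = (h * (h + θ) ^ k).valuation := by rw [hpow]
    rw [pval_pow _ hnum, pval_mul hh0 (pow_ne_zero _ hhθ), pval_pow _ hhθ] at h1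
    exact h1
  have hA1 : 2*q + s < 0 → A = 2*q + s := by
    intro hlt
    rw [hAdef, pval_add_eq_left (mul_ne_zero hθ0 hh0) one_ne_zero
      (by rw [vθh, Padic.valuation_one]; omega), vθh]
  have hA2 : 0 < 2*q + s → A = 0 := by
    intro hlt
    rw [hAdef, pval_add_eq_right (mul_ne_zero hθ0 hh0) one_ne_zero
      (by rw [vθh, Padic.valuation_one]; omega), Padic.valuation_one]
  have hA3 : min (2*q + s) 0 ≤ A := by
    have := Padic.le_valuation_add (x := θ * h) (y := 1) (by rwa [hθdef] at hnum)
    rw [vθh, Padic.valuation_one] at this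
    exact this
  have hB1 : s < 2*q → B = s := by
    intro hlt
    rw [hBdef, pval_add_eq_left hh0 hθ0 (by rw [vθ]; omega)]
  have hB2 : 2*q < s → B = 2*q := by
    intro hlt
    rw [hBdef, pval_add_eq_right hh0 hθ0 (by rw [vθ]; omega), vθ]
  have hB3 : min s (2*q) ≤ B := by
    have := Padic.le_valuation_add (x := h) (y := θ) hhθ
    rw [vθ] at this
    exact this
  have hK2 : (2:ℤ) ≤ (k:ℤ) := by exact_mod_cast hk
  have hclass := s_classification hK2 hA1 hA2 hA3 hB1 hB2 hB3 heqAB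
  -- valuations of the two powers of ρ appearing in the denominator
  set t : ℚ_[2] := ρ ^ (-N) * h + ρ ^ N with htdef
  set u : ℤ := t.valuation with hudef
  set w : ℤ := (h + 1).valuation with hwdef
  have vt1 : (ρ ^ (-N) * h).valuation = -q + s := by
    rw [pval_mul (zpow_ne_zero _ hρ0) hh0, pval_zpow _ hρ0, hqdef]; ring
  have vt2 : (ρ ^ N).valuation = q := by
    rw [pval_zpow _ hρ0, hqdef]
  constructor
  · -- unbounded → ‖ρ‖ = 1
    intro H
    by_contra hnorm1
    have hr0 : r ≠ 0 := by
      intro h0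
      apply hnorm1
      rw [Padic.norm_eq_zpow_neg_valuation hρ0, ← hrdef, h0]
      norm_num
    have hq0 : q ≠ 0 := by
      rw [hqdef]
      exact mul_ne_zero hN hr0
    -- compute u in each case
    have hcase : (0 ≤ s ∧ u = -|q|) ∨ (q < 0 ∧ s = 2*(k:ℤ)*q ∧ u = -q + s) := by
      rcases hclass with hs0 | ⟨hqneg, hs⟩
      · left
        refine ⟨le_of_eq hs0.symm, ?_⟩
        rcases lt_or_gt_of_ne hq0 with hq | hq
        · rw [hudef, htdef, pval_add_eq_right (mul_ne_zero (zpow_ne_zero _ hρ0) hh0)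
            (zpow_ne_zero _ hρ0) (by rw [vt1, vt2]; omega), vt2, abs_of_neg hq]
          omega
        · rw [hudef, htdef, pval_add_eq_left (mul_ne_zero (zpow_ne_zero _ hρ0) hh0)
            (zpow_ne_zero _ hρ0) (by rw [vt1, vt2]; omega), vt1, abs_of_pos hq]
          omega
      · rcases hs with hs | hs
        · -- s = -(2kq) > 0, u = q = -|q|
          left
          have hkq : q * (k:ℤ) < 0 := mul_neg_of_neg_of_pos hqneg (by omega)
          have hspos : 0 ≤ s := by rw [hs]; linarith
          refine ⟨hspos, ?_⟩
          rw [hudef, htdef, pval_add_eq_right (mul_ne_zero (zpow_ne_zero _ hρ0) hh0)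
            (zpow_ne_zero _ hρ0) (by rw [vt1, vt2]; linarith [hs]), vt2, abs_of_neg hqneg]
          omega
        · -- s = 2kq < 0, u = -q + s
          right
          refine ⟨hqneg, hs, ?_⟩
          have hkq : q * ((k:ℤ) - 1) < 0 := mul_neg_of_neg_of_pos hqneg (by omega)
          have hlt : -q + s < q := by rw [hs]; linarith
          rw [hudef, htdef, pval_add_eq_left (mul_ne_zero (zpow_ne_zero _ hρ0) hh0)
            (zpow_ne_zero _ hρ0) (by rw [vt1, vt2]; omega), vt1]
    -- the uniform bound
    obtain ⟨n, hn1, σ, hMlt⟩ := H ((2:ℝ) ^ (2*(k:ℤ)*|q| + w))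
    have hbound : ‖cylinderValue2 k N ρ h n σ‖ ≤ (2:ℝ) ^ (2*(k:ℤ)*|q| + w) := by
      apply norm_le_two_zpow (cyl_ne_zero hρ0 hh0 hdenom hh1)
      rw [val_cyl hρ0 hh0 hdenom hh1, ← htdef, ← hudef, ← hwdef, ← hsdef, ← hrdef]
      set E : ℤ := (En k n : ℤ) with hEdef
      set H' : ℤ := isingHam k N n σ with hHdef
      set c : ℤ := (bdryPlusCount k n σ : ℤ) with hcdef
      have hE0 : 0 ≤ E := Int.natCast_nonneg _
      have hc0 : 0 ≤ c := Int.natCast_nonneg _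
      have hcle : c ≤ (k:ℤ)^n := by
        rw [hcdef]
        exact_mod_cast bdry_le k n σ
      have hHabs : |H'| ≤ |N| * E := by
        rw [hHdef, hEdef]
        exact isingHam_abs_le hk N n σ
      have hHr : -(|q| * E) ≤ H' * r := by
        have h1 : |H' * r| ≤ |q| * E := by
          rw [abs_mul]
          calc |H'| * |r| ≤ (|N| * E) * |r| := mul_le_mul_of_nonneg_right hHabs (abs_nonneg r)
            _ = |q| * E := by rw [hqdef, abs_mul]; ring
        linarith [neg_abs_le (H' * r), abs_nonneg (H' * r)]
      have hEK : ((k:ℤ) - 1) * E + (k:ℤ) = (k:ℤ) * (k:ℤ)^n := by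
        have h1 := En_key hk n
        have hcast : ((k - 1 : ℕ) : ℤ) = (k:ℤ) - 1 := by omega
        have h2 : ((k:ℤ) - 1) * E + (k:ℤ) = (k:ℤ)^(n+1) := by
          rw [hEdef, ← hcast]
          calc ((k - 1 : ℕ):ℤ) * (En k n : ℤ) + (k:ℤ)
              = (((k-1) * En k n + k : ℕ) : ℤ) := by push_cast; ring
            _ = (k:ℤ)^(n+1) := by rw [h1]; push_cast; ring
        rw [pow_succ] at h2
        linarith
      rcases hcase with ⟨hs0, hu⟩ | ⟨hqneg, hs, hu⟩
      · -- easy case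
        have h2 : 0 ≤ c * s := mul_nonneg hc0 hs0
        have h3 : 0 ≤ |q| := abs_nonneg q
        have h4 : 0 ≤ 2*(k:ℤ)*|q| := by positivity
        rw [hu]
        linarith
      · -- tight case
        have habs : |q| = -q := abs_of_neg hqneg
        have hkq : q * (k:ℤ) < 0 := mul_neg_of_neg_of_pos hqneg (by omega)
        have hcs : (k:ℤ)^n * s ≤ c * s := by
          apply mul_le_mul_of_nonpos_right hcle
          rw [hs]; linarith
        have key : q*E + ((k:ℤ)^n)*s - E*(-q+s) = 2*(k:ℤ)*q := by
          rw [hs]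
          linear_combination (-2)*q*hEK
        have hHr' : q * E ≤ H' * r := by rw [habs] at hHr; linarith
        rw [hu, habs]
        linarith
    exact absurd hMlt (not_lt.2 hbound)
  · -- ‖ρ‖ = 1 → unbounded
    intro hρ1
    have hr0 : r = 0 := by
      have h1 : ((2:ℕ):ℝ) ^ (-r) = ((2:ℕ):ℝ) ^ (0:ℤ) := by
        rw [zpow_zero]
        rw [Padic.norm_eq_zpow_neg_valuation hρ0] at hρ1
        exact hρ1
      have := (zpow_right_strictMono₀ (show (1:ℝ) < ((2:ℕ):ℝ) by norm_num)).injective h1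
      omega
    have hq0 : q = 0 := by rw [hqdef, hr0, mul_zero]
    have hs0 : s = 0 := by
      rcases hclass with hs0 | ⟨hqneg, _⟩
      · exact hs0
      · omega
    have hhnorm : ‖h‖ = 1 := by
      rw [Padic.norm_eq_zpow_neg_valuation hh0, ← hsdef, hs0]
      norm_num
    -- ‖t‖ ≤ 1/2
    have hx : ‖ρ ^ (-(2*N)) * h‖ = 1 := by
      rw [norm_mul, norm_zpow, hρ1, one_zpow, hhnorm, one_mul]
    have htfact : t = ρ ^ N * (ρ ^ (-(2*N)) * h + 1) := by
      rw [mul_add, mul_one, ← mul_assoc, ← zpow_add₀ hρ0]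
      rw [show N + -(2*N) = -N by ring]
    have htnorm : ‖t‖ ≤ 2⁻¹ := by
      rw [htfact, norm_mul, norm_zpow, hρ1, one_zpow, one_mul]
      exact norm_add_one_le_half hx
    have hth1 : (0:ℝ) < ‖h + 1‖ := norm_pos_iff.2 hh1
    have htpos : (0:ℝ) < ‖t‖ := norm_pos_iff.2 (by rwa [htdef])
    intro M
    obtain ⟨n0, hn0⟩ := pow_unbounded_of_one_lt (M * ‖h + 1‖) (show (1:ℝ) < 2 by norm_num)
    refine ⟨max n0 1, le_max_right _ _, fun _ => false, ?_⟩
    set n : ℕ := max n0 1 with hndef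
    set E : ℕ := En k n with hE
    have hcyl : cylinderValue2 k N ρ h n (fun _ => false)
        = ρ ^ (N * (E:ℤ)) / (t ^ E * (h + 1)) := by
      unfold cylinderValue2
      rw [isingHam_false hk N n]
      have hbc : bdryPlusCount k n (fun _ => false) = 0 := by
        simp [bdryPlusCount]
      rw [hbc, pow_zero, mul_one]
      rfl
    rw [hcyl, norm_div, norm_zpow, hρ1, one_zpow, norm_mul, norm_pow]
    have h1 : ‖t‖ ^ E ≤ (2⁻¹:ℝ) ^ E := pow_le_pow_left₀ (norm_nonneg t) htnorm E
    have h2 : ‖t‖ ^ E * ‖h + 1‖ ≤ (2⁻¹:ℝ) ^ E * ‖h + 1‖ :=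
      mul_le_mul_of_nonneg_right h1 (norm_nonneg _)
    have h3 : (0:ℝ) < ‖t‖ ^ E * ‖h + 1‖ := by positivity
    have h4 : (0:ℝ) < (2⁻¹:ℝ) ^ E * ‖h + 1‖ := by positivity
    have h5 : 1 / ((2⁻¹:ℝ) ^ E * ‖h + 1‖) ≤ 1 / (‖t‖ ^ E * ‖h + 1‖) :=
      one_div_le_one_div_of_le h3 h2
    have h6 : (1:ℝ) / ((2⁻¹:ℝ) ^ E * ‖h + 1‖) = 2 ^ E / ‖h + 1‖ := by
      rw [inv_pow]
      field_simp
    have h7 : M < 2 ^ E / ‖h + 1‖ := by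
      rw [lt_div_iff₀ hth1]
      have hle : (2:ℝ) ^ n0 ≤ 2 ^ E := by
        apply pow_le_pow_right₀ (by norm_num)
        calc n0 ≤ n := le_max_left _ _
          _ ≤ E := En_ge hk n
      linarith
    calc M < 2 ^ E / ‖h + 1‖ := h7
      _ = 1 / ((2⁻¹:ℝ) ^ E * ‖h + 1‖) := h6.symm
      _ ≤ 1 / (‖t‖ ^ E * ‖h + 1‖) := h5
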